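/- Let n ≥ 2, ω = exp(2πi/n), let Aₙ ∈ Mₙ(ℂ) be the diagonal matrix with (Aₙ)_{jj} = ω^j for j = 0,…,n−1, and let Fₙ be the Fourier matrix with entries (Fₙ)_{jk} = ω^{jk}. Let h ∈ Mₙ(ℂ) be a complex Hadamard matrix and set B = (1/n)·hᴴ Aₙ h. Then {(x,y,z₁,z₂) ∈ ℂ⁴ : det(x·Aₙ + y·B + z₁·AₙB + z₂·BAₙ − I) = 0} = {(x,y,z₁,z₂) ∈ ℂ⁴ : xⁿ + yⁿ + (−1)^{n−1}(ω z₁ + z₂)ⁿ = 1} if and only if there exist diagonal matrices Λ₁, Λ₂ ∈ Mₙ(ℂ) all of whose diagonal entries have modulus 1 such that h = Λ₁ Fₙ Λ₂. -/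

import Mathlib

open Matrix Complex Polynomial Finset
open Fin.NatCast Fin.CommRing

noncomputable section

namespace Stmt7Aux

variable {n : ℕ}

/-- Matrix whose columns in `S` come from `M` and the others from `N`. -/
def mixM (M N : Matrix (Fin n) (Fin n) ℂ) (S : Finset (Fin n)) : Matrix (Fin n) (Fin n) ℂ :=
  fun i j => if j ∈ S then M i j else N i j

lemma det_smul_add (M N : Matrix (Fin n) (Fin n) ℂ) (t : ℂ) :
    det (t • M + N)
      = ∑ S ∈ (univ : Finset (Fin n)).powerset, t ^ S.card * det (mixM M N S) := by
  rw [det_apply']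
  have key : ∀ σ : Equiv.Perm (Fin n),
      (∏ i, (t • M + N) (σ i) i)
        = ∑ S ∈ (univ : Finset (Fin n)).powerset,
            t ^ S.card * ∏ i, (mixM M N S) (σ i) i := by
    intro σ
    have h1 : ∀ i : Fin n, (t • M + N) (σ i) i = t * M (σ i) i + N (σ i) i := by
      intro i; simp [Matrix.add_apply, Matrix.smul_apply, smul_eq_mul]
    rw [Finset.prod_congr rfl (fun i _ => h1 i), Finset.prod_add]
    refine Finset.sum_congr rfl ?_
    intro S hS
    have hsub : S ⊆ univ := Finset.mem_powerset.mp hS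
    rw [Finset.prod_mul_distrib, Finset.prod_const]
    have hsplit : (∏ i, (mixM M N S) (σ i) i)
        = (∏ i ∈ univ \ S, (mixM M N S) (σ i) i) * ∏ i ∈ S, (mixM M N S) (σ i) i := by
      rw [Finset.prod_sdiff hsub]
    have e1 : (∏ i ∈ S, (mixM M N S) (σ i) i) = ∏ i ∈ S, M (σ i) i :=
      Finset.prod_congr rfl (fun i hi => by simp [mixM, hi])
    have e2 : (∏ i ∈ univ \ S, (mixM M N S) (σ i) i) = ∏ i ∈ univ \ S, N (σ i) i :=
      Finset.prod_congr rfl (fun i hi => by simp [mixM, (Finset.mem_sdiff.mp hi).2])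
    rw [hsplit, e1, e2]; ring
  calc ∑ σ : Equiv.Perm (Fin n), ((Equiv.Perm.sign σ : ℤ) : ℂ) * ∏ i, (t • M + N) (σ i) i
      = ∑ σ : Equiv.Perm (Fin n), ∑ S ∈ (univ : Finset (Fin n)).powerset,
          t ^ S.card * (((Equiv.Perm.sign σ : ℤ) : ℂ) * ∏ i, (mixM M N S) (σ i) i) := by
        refine Finset.sum_congr rfl fun σ _ => ?_
        rw [key σ, Finset.mul_sum]
        exact Finset.sum_congr rfl fun S _ => by ring
    _ = ∑ S ∈ (univ : Finset (Fin n)).powerset, t ^ S.card * det (mixM M N S) := by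
        rw [Finset.sum_comm]
        refine Finset.sum_congr rfl fun S _ => ?_
        rw [det_apply', Finset.mul_sum]

/-- The polynomial `t ↦ det (t • M + N)`. -/
def detPoly (M N : Matrix (Fin n) (Fin n) ℂ) : Polynomial ℂ :=
  ∑ S ∈ (univ : Finset (Fin n)).powerset, Polynomial.C (det (mixM M N S)) * Polynomial.X ^ S.card

lemma detPoly_eval (M N : Matrix (Fin n) (Fin n) ℂ) (t : ℂ) :
    (detPoly M N).eval t = det (t • M + N) := by
  rw [det_smul_add, detPoly, Polynomial.eval_finset_sum]
  refine Finset.sum_congr rfl fun S _ => ?_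
  rw [Polynomial.eval_mul, Polynomial.eval_C, Polynomial.eval_pow, Polynomial.eval_X, mul_comm]

lemma detPoly_natDegree_le (M N : Matrix (Fin n) (Fin n) ℂ) :
    (detPoly M N).natDegree ≤ n := by
  refine Polynomial.natDegree_sum_le_of_forall_le _ _ fun S hS => ?_
  refine (Polynomial.natDegree_C_mul_le _ _).trans ?_
  refine (Polynomial.natDegree_X_pow_le _).trans ?_
  exact le_trans (Nat.le_refl _) (by simpa using Finset.card_le_univ S)

lemma detPoly_coeff (M N : Matrix (Fin n) (Fin n) ℂ) (k : ℕ) :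
    (detPoly M N).coeff k
      = ∑ S ∈ (univ : Finset (Fin n)).powerset.filter (fun S => S.card = k),
          det (mixM M N S) := by
  rw [detPoly, Polynomial.finset_sum_coeff, Finset.sum_filter]
  refine Finset.sum_congr rfl fun S _ => ?_
  rw [Polynomial.coeff_C_mul, Polynomial.coeff_X_pow]
  by_cases hc : S.card = k
  · simp [hc]
  · simp [hc, Ne.symm hc]

lemma detPoly_coeff_card (M N : Matrix (Fin n) (Fin n) ℂ) :
    (detPoly M N).coeff n = det M := by
  rw [detPoly_coeff]
  have hfil : (univ : Finset (Fin n)).powerset.filter (fun S => S.card = n) = {univ} := by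
    ext S
    simp only [Finset.mem_filter, Finset.mem_powerset, Finset.mem_singleton]
    constructor
    · rintro ⟨_, hcard⟩
      apply Finset.eq_univ_of_card
      simpa using hcard
    · rintro rfl; simp
  rw [hfil, Finset.sum_singleton]
  congr 1
  ext i j; simp [mixM]

lemma mixM_singleton (M N : Matrix (Fin n) (Fin n) ℂ) (j : Fin n) :
    mixM M N {j} = N.updateCol j (fun i => M i j) := by
  ext i k
  by_cases hk : k = j
  · subst hk; simp [mixM, Matrix.updateCol_self]
  · simp [mixM, hk, Matrix.updateCol_ne hk]

lemma detPoly_coeff_one (M N : Matrix (Fin n) (Fin n) ℂ) :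
    (detPoly M N).coeff 1
      = ∑ j : Fin n, det (N.updateCol j (fun i => M i j)) := by
  rw [detPoly_coeff]
  have hfil : (univ : Finset (Fin n)).powerset.filter (fun S => S.card = 1)
      = (univ : Finset (Fin n)).image (fun j => ({j} : Finset (Fin n))) := by
    ext S
    simp only [Finset.mem_filter, Finset.mem_powerset, Finset.mem_image]
    constructor
    · rintro ⟨_, hcard⟩
      obtain ⟨j, rfl⟩ := Finset.card_eq_one.mp hcard
      exact ⟨j, Finset.mem_univ _, rfl⟩
    · rintro ⟨j, _, rfl⟩
      exact ⟨Finset.subset_univ _, Finset.card_singleton j⟩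
  rw [hfil, Finset.sum_image (fun a _ b _ hab => by
    simpa using congrArg (fun (s : Finset (Fin n)) => a ∈ s) hab)]
  exact Finset.sum_congr rfl fun j _ => by rw [mixM_singleton]

lemma mixM_erase (M N : Matrix (Fin n) (Fin n) ℂ) (j : Fin n) :
    mixM M N (Finset.univ.erase j) = M.updateCol j (fun i => N i j) := by
  ext i k
  by_cases hk : k = j
  · subst hk; simp [mixM, Matrix.updateCol_self]
  · simp [mixM, hk, Matrix.updateCol_ne hk]

lemma detPoly_coeff_pred (hn : 1 ≤ n) (M N : Matrix (Fin n) (Fin n) ℂ) :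
    (detPoly M N).coeff (n - 1)
      = ∑ j : Fin n, det (M.updateCol j (fun i => N i j)) := by
  rw [detPoly_coeff]
  have hfil : (univ : Finset (Fin n)).powerset.filter (fun S => S.card = n - 1)
      = (univ : Finset (Fin n)).image (fun j => Finset.univ.erase j) := by
    ext S
    simp only [Finset.mem_filter, Finset.mem_powerset, Finset.mem_image]
    constructor
    · rintro ⟨_, hcard⟩
      have hcompl : Sᶜ.card = 1 := by
        rw [Finset.card_compl, hcard]
        simp only [Fintype.card_fin]
        omega
      obtain ⟨j, hj⟩ := Finset.card_eq_one.mp hcompl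
      refine ⟨j, Finset.mem_univ _, ?_⟩
      have := congrArg (fun s : Finset (Fin n) => sᶜ) hj
      simp only [compl_compl] at this
      rw [this, Finset.compl_singleton]
    · rintro ⟨j, _, rfl⟩
      refine ⟨Finset.subset_univ _, ?_⟩
      rw [Finset.card_erase_of_mem (Finset.mem_univ _)]
      simp
  rw [hfil, Finset.sum_image ?hinj]
  case hinj =>
    intro a _ b _ hab
    have := congrArg (fun s : Finset (Fin n) => sᶜ) hab
    simpa [Finset.compl_erase] using this
  exact Finset.sum_congr rfl fun j _ => by rw [mixM_erase]

lemma det_diag_cycle [NeZero n] (hn : 2 ≤ n) (M : Matrix (Fin n) (Fin n) ℂ)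
    (hsupp : ∀ j k : Fin n, j ≠ k → j ≠ k + 1 → M j k = 0) :
    det M = (∏ j, M j j) + (-1 : ℂ) ^ (n - 1) * ∏ k, M (k + 1) k := by
  have h10 : (1 : Fin n) ≠ 0 := by
    intro hc
    have := congrArg Fin.val hc
    simp [Fin.val_one', Nat.mod_eq_of_lt (by omega : 1 < n)] at this
  set cyc : Equiv.Perm (Fin n) := Equiv.addRight 1 with hcyc
  have hcyc_apply : ∀ k : Fin n, cyc k = k + 1 := fun k => rfl
  have hclass : ∀ σ : Equiv.Perm (Fin n), (∀ k, σ k = k ∨ σ k = k + 1) →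
      σ = 1 ∨ σ = cyc := by
    intro σ hσ
    by_cases hex : ∃ k₀, σ k₀ = k₀ + 1
    · right
      obtain ⟨k₀, hk₀⟩ := hex
      have step : ∀ m : ℕ, σ (k₀ + (m : Fin n)) = (k₀ + (m : Fin n)) + 1 := by
        intro m
        induction m with
        | zero => simpa using hk₀
        | succ m ih =>
          have hcast : ((m + 1 : ℕ) : Fin n) = (m : Fin n) + 1 := by push_cast; ring
          rw [hcast, ← add_assoc]
          rcases hσ (k₀ + (m : Fin n) + 1) with h1 | h1
          · exfalso
            have heq : σ (k₀ + (m : Fin n) + 1) = σ (k₀ + (m : Fin n)) := by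
              rw [h1, ih]
            have := σ.injective heq
            have : (1 : Fin n) = 0 := by
              have h2 := left_eq_add.mp this.symm
              exact h2
            exact h10 this
          · exact h1
      ext k
      have hk : k = k₀ + ((k - k₀).val : Fin n) := by
        rw [Fin.cast_val_eq_self]
        rw [add_sub_cancel]
      rw [hcyc_apply k]
      conv_lhs => rw [hk]
      rw [step]
      rw [← hk]
    · left
      ext k
      rcases hσ k with h1 | h1
      · simp [h1]
      · exact absurd ⟨k, h1⟩ hex
  have hne : (1 : Equiv.Perm (Fin n)) ≠ cyc := by
    intro hc
    have := congrArg (fun σ : Equiv.Perm (Fin n) => σ 0) hc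
    simp only [Equiv.Perm.one_apply, hcyc_apply] at this
    exact h10 (by simpa using this.symm)
  rw [det_apply']
  rw [← Finset.sum_subset (Finset.subset_univ ({1, cyc} : Finset (Equiv.Perm (Fin n)))) ?hvanish]
  case hvanish =>
    intro σ _ hσ
    simp only [Finset.mem_insert, Finset.mem_singleton] at hσ
    push_neg at hσ
    have : ¬ (∀ k, σ k = k ∨ σ k = k + 1) := by
      intro hall
      rcases hclass σ hall with h1 | h1
      · exact hσ.1 h1
      · exact hσ.2 h1
    push_neg at this
    obtain ⟨k, hk1, hk2⟩ := this
    have : M (σ k) k = 0 := hsupp _ _ hk1 hk2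
    have hz : (∏ i, M (σ i) i) = 0 := Finset.prod_eq_zero (Finset.mem_univ k) this
    rw [hz, mul_zero]
  rw [Finset.sum_pair hne]
  obtain ⟨m, rfl⟩ : ∃ m, n = m + 1 := ⟨n - 1, by omega⟩
  have hsign : Equiv.Perm.sign cyc = (-1 : ℤˣ) ^ m := by
    have : cyc = finRotate (m + 1) := by
      ext k
      rw [hcyc_apply, finRotate_succ_apply]
    rw [this, sign_finRotate, Nat.add_sub_cancel]
  simp only [Equiv.Perm.sign_one, Equiv.Perm.one_apply, hsign, hcyc_apply]
  push_cast
  ring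

lemma eq_zero_of_trace_mul_conjTranspose (M : Matrix (Fin n) (Fin n) ℂ)
    (htr : trace (M * Mᴴ) = 0) : M = 0 := by
  have hdiag : trace (M * Mᴴ) = ∑ i : Fin n, ∑ j : Fin n, (Complex.normSq (M i j) : ℂ) := by
    rw [Matrix.trace]
    refine Finset.sum_congr rfl fun i _ => ?_
    rw [Matrix.diag_apply, Matrix.mul_apply]
    refine Finset.sum_congr rfl fun j _ => ?_
    rw [Matrix.conjTranspose_apply, Complex.star_def, Complex.mul_conj]
  rw [hdiag] at htr
  have hre : ∑ i : Fin n, ∑ j : Fin n, Complex.normSq (M i j) = 0 := by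
    have := congrArg Complex.re htr
    simpa using this
  ext i j
  have hij : Complex.normSq (M i j) = 0 := by
    have h1 : ∀ i ∈ (univ : Finset (Fin n)), (0:ℝ) ≤ ∑ j, Complex.normSq (M i j) :=
      fun i _ => Finset.sum_nonneg fun j _ => Complex.normSq_nonneg _
    have h2 := (Finset.sum_eq_zero_iff_of_nonneg h1).mp hre i (Finset.mem_univ i)
    have h3 : ∀ j ∈ (univ : Finset (Fin n)), (0:ℝ) ≤ Complex.normSq (M i j) :=
      fun j _ => Complex.normSq_nonneg _
    exact (Finset.sum_eq_zero_iff_of_nonneg h3).mp h2 j (Finset.mem_univ j)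
  simpa using Complex.normSq_eq_zero.mp hij

lemma prod_sub_pow (hn : 0 < n) {ω : ℂ} (hprim : IsPrimitiveRoot ω n) (y w : ℂ) :
    ∏ j ∈ Finset.range n, (y - ω ^ j * w) = y ^ n - w ^ n := by
  have hpoly := X_pow_sub_C_eq_prod hprim hn (rfl : w ^ n = w ^ n)
  have := congrArg (Polynomial.eval y) hpoly
  simpa [Polynomial.eval_prod] using this.symm

lemma geom_sum_root (hn : 0 < n) {ζ : ℂ} (h1 : ζ ^ n = 1) :
    ∑ l ∈ Finset.range n, ζ ^ l = if ζ = 1 then (n : ℂ) else 0 := by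
  by_cases hz : ζ = 1
  · simp [hz]
  · rw [if_neg hz, geom_sum_eq hz, h1, sub_self, zero_div]

lemma coeff_linear_pow_one (a b : ℂ) (m : ℕ) (hm : 1 ≤ m) :
    ((Polynomial.C a * Polynomial.X + Polynomial.C b) ^ m).coeff 1
      = (m:ℂ) * a * b ^ (m - 1) := by
  rw [add_pow, Polynomial.finset_sum_coeff]
  have hterm : ∀ k : ℕ,
      ((Polynomial.C a * Polynomial.X) ^ k * Polynomial.C b ^ (m - k)
        * ((m.choose k : ℕ) : Polynomial ℂ)).coeff 1
      = if k = 1 then (m:ℂ) * a * b ^ (m-1) else 0 := by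
    intro k
    have hrw : (Polynomial.C a * Polynomial.X) ^ k * Polynomial.C b ^ (m - k)
        * ((m.choose k : ℕ) : Polynomial ℂ)
        = Polynomial.C (a ^ k) * (Polynomial.C (b ^ (m-k))
            * (Polynomial.C (((m.choose k : ℕ)) : ℂ) * Polynomial.X ^ k)) := by
      rw [mul_pow, ← Polynomial.C_pow, ← Polynomial.C_pow, ← Polynomial.C_eq_natCast]
      ring
    rw [hrw, Polynomial.coeff_C_mul, Polynomial.coeff_C_mul, Polynomial.coeff_C_mul,
      Polynomial.coeff_X_pow]
    by_cases hk : k = 1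
    · subst hk
      rw [if_pos rfl, if_pos rfl, mul_one, Nat.choose_one_right]
      ring
    · rw [if_neg (fun hc => hk hc.symm)]
      simp [hk]
  rw [Finset.sum_congr rfl (fun k _ => hterm k)]
  rw [Finset.sum_ite_eq' (Finset.range (m+1)) 1 (fun _ => (m:ℂ) * a * b ^ (m-1))]
  rw [if_pos (Finset.mem_range.mpr (by omega))]

end Stmt7Aux

open Stmt7Aux

theorem stmt_7 (n : ℕ) (hn : 2 ≤ n)
    (ω : ℂ) (hω : ω = Complex.exp (2 * Real.pi * Complex.I / n))
    (A F : Matrix (Fin n) (Fin n) ℂ)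
    (hA : A = Matrix.diagonal (fun j : Fin n => ω ^ (j : ℕ)))
    (hF : F = Matrix.of (fun j k : Fin n => ω ^ ((j : ℕ) * (k : ℕ))))
    (h : Matrix (Fin n) (Fin n) ℂ)
    (hHadUnimod : ∀ j k : Fin n, ‖h j k‖ = 1)
    (hHadOrtho : h * hᴴ = (n : ℂ) • (1 : Matrix (Fin n) (Fin n) ℂ))
    (B : Matrix (Fin n) (Fin n) ℂ)
    (hB : B = ((1 : ℂ) / n) • (hᴴ * A * h)) :
    ({p : ℂ × ℂ × ℂ × ℂ |
        (p.1 • A + p.2.1 • B + p.2.2.1 • (A * B) + p.2.2.2 • (B * A) - 1).det = 0} =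
      {p : ℂ × ℂ × ℂ × ℂ |
        p.1 ^ n + p.2.1 ^ n + (-1 : ℂ) ^ (n - 1) * (ω * p.2.2.1 + p.2.2.2) ^ n = 1})
    ↔ ∃ d₁ d₂ : Fin n → ℂ,
        (∀ j, ‖d₁ j‖ = 1) ∧ (∀ j, ‖d₂ j‖ = 1) ∧
        h = Matrix.diagonal d₁ * F * Matrix.diagonal d₂ := by
  haveI : NeZero n := ⟨by omega⟩
  have hn0 : 0 < n := by omega
  have hnne : n ≠ 0 := by omega
  have hnC : (n : ℂ) ≠ 0 := Nat.cast_ne_zero.mpr hnne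
  have hprim : IsPrimitiveRoot ω n := by
    rw [hω]; exact Complex.isPrimitiveRoot_exp n hnne
  have hω1 : ω ^ n = 1 := hprim.pow_eq_one
  have hωne : ω ≠ 0 := by
    intro h0; rw [h0, zero_pow hnne] at hω1; exact zero_ne_one hω1
  have hpowmod : ∀ a : ℕ, ω ^ (a % n) = ω ^ a := by
    intro a
    conv_rhs => rw [← Nat.mod_add_div a n]
    rw [pow_add, pow_mul, hω1, one_pow, mul_one]
  have hval1 : ((1 : Fin n) : ℕ) = 1 := by
    rw [Fin.val_one']; exact Nat.mod_eq_of_lt (by omega)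
  have hvaladd : ∀ k : Fin n, ((k + 1 : Fin n) : ℕ) = ((k : ℕ) + 1) % n := by
    intro k; rw [Fin.add_def, hval1]
  have hpow_fin_succ : ∀ k : Fin n, ω ^ ((k + 1 : Fin n) : ℕ) = ω ^ ((k : ℕ) + 1) := by
    intro k; rw [hvaladd, hpowmod]
  have h10 : (1 : Fin n) ≠ 0 := by
    intro hc
    have := congrArg Fin.val hc
    rw [hval1] at this
    simp at this
  have hjj1 : ∀ j : Fin n, j ≠ j + 1 := by
    intro j hc
    exact h10 (left_eq_add.mp hc)
  have hconjω : (starRingEnd ℂ) ω = ω⁻¹ := by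
    have hc : (starRingEnd ℂ) (2 * (Real.pi : ℂ) * Complex.I / n)
        = -(2 * (Real.pi : ℂ) * Complex.I / n) := by
      rw [map_div₀, _root_.map_mul, _root_.map_mul, Complex.conj_I, Complex.conj_ofReal,
        Complex.conj_natCast, map_ofNat]
      ring
    rw [hω, ← Complex.exp_conj, hc, Complex.exp_neg]
  have hζinv : ∀ m : ℕ, (starRingEnd ℂ) (ω ^ m) = (ω ^ m)⁻¹ := by
    intro m; rw [map_pow, hconjω, inv_pow]
  have hunit : ∀ z : ℂ, ‖z‖ = 1 → (starRingEnd ℂ) z * z = 1 := by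
    intro z hz
    rw [mul_comm, Complex.mul_conj, Complex.normSq_eq_norm_sq, hz]
    norm_num
  have hpow_neg1 : (-1 : ℂ) ^ n = -(-1 : ℂ) ^ (n - 1) := by
    obtain ⟨m, rfl⟩ : ∃ m, n = m + 1 := ⟨n - 1, by omega⟩
    rw [pow_succ, Nat.add_sub_cancel]
    ring
  have hAapp : ∀ j k : Fin n, A j k = if j = k then ω ^ (j : ℕ) else 0 := by
    intro j k
    by_cases hjk : j = k
    · subst hjk; rw [hA]; simp
    · rw [hA, Matrix.diagonal_apply_ne _ hjk, if_neg hjk]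
  have hABapp : ∀ j k : Fin n, (A * B) j k = ω ^ (j : ℕ) * B j k := by
    intro j k; rw [hA, Matrix.diagonal_mul]
  have hBAapp : ∀ j k : Fin n, (B * A) j k = B j k * ω ^ (k : ℕ) := by
    intro j k; rw [hA, Matrix.mul_diagonal]
  constructor
  · intro hSet
    have hc2 : ((-1:ℂ)^(n-1)) * ((-1:ℂ)^(n-1)) = 1 := by
      rw [← pow_add]
      have he : (n-1) + (n-1) = 2*(n-1) := by ring
      rw [he, pow_mul]
      norm_num
    have hhHh : hᴴ * h = (n : ℂ) • (1 : Matrix (Fin n) (Fin n) ℂ) := by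
      have h1 : h * (((1:ℂ) / n) • hᴴ) = 1 := by
        rw [Matrix.mul_smul, hHadOrtho, smul_smul, one_div, inv_mul_cancel₀ hnC, one_smul]
      have h2 : (((1:ℂ) / n) • hᴴ) * h = 1 := mul_eq_one_comm.mp h1
      have h3 : (n:ℂ) • ((((1:ℂ) / n) • hᴴ) * h) = (n:ℂ) • (1 : Matrix (Fin n) (Fin n) ℂ) := by
        rw [h2]
      rw [Matrix.smul_mul, smul_smul, mul_one_div, div_self hnC, one_smul] at h3
      exact h3
    have hAH : A * Aᴴ = 1 := by
      rw [hA, Matrix.diagonal_conjTranspose, Matrix.diagonal_mul_diagonal]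
      have he : (fun i : Fin n => ω ^ (i:ℕ) * Star.star (fun j : Fin n => ω ^ (j:ℕ)) i)
          = fun _ : Fin n => (1:ℂ) := by
        funext i
        show ω ^ (i:ℕ) * star (ω ^ (i:ℕ)) = 1
        rw [Complex.star_def, hζinv, mul_inv_cancel₀ (pow_ne_zero _ hωne)]
      rw [show (diagonal (fun i : Fin n => ω ^ (i:ℕ) * Star.star (fun j : Fin n => ω ^ (j:ℕ)) i) : Matrix (Fin n) (Fin n) ℂ) = diagonal (fun _ : Fin n => (1:ℂ)) from by rw [he]]
      rw [Matrix.diagonal_one]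
    have hAHA : Aᴴ * A = 1 := mul_eq_one_comm.mp hAH
    have hBH : Bᴴ = ((1:ℂ)/n) • (hᴴ * (Aᴴ * h)) := by
      rw [hB, Matrix.conjTranspose_smul, Matrix.conjTranspose_mul, Matrix.conjTranspose_mul,
        Matrix.conjTranspose_conjTranspose]
      have hstar : star ((1:ℂ)/n) = (1:ℂ)/n := by
        rw [Complex.star_def, map_div₀, _root_.map_one, Complex.conj_natCast]
      rw [hstar]
    have hBBH : B * Bᴴ = 1 := by
      rw [hBH, hB, Matrix.smul_mul, Matrix.mul_smul, smul_smul]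
      have hmid : (hᴴ * A * h) * (hᴴ * (Aᴴ * h)) = (n:ℂ) • ((n:ℂ) • (1 : Matrix (Fin n) (Fin n) ℂ)) := by
        calc (hᴴ * A * h) * (hᴴ * (Aᴴ * h))
            = hᴴ * (A * ((h * hᴴ) * (Aᴴ * h))) := by simp only [Matrix.mul_assoc]
          _ = hᴴ * (A * ((n:ℂ) • (Aᴴ * h))) := by rw [hHadOrtho, Matrix.smul_mul, Matrix.one_mul]
          _ = (n:ℂ) • (hᴴ * (A * (Aᴴ * h))) := by rw [Matrix.mul_smul, Matrix.mul_smul]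
          _ = (n:ℂ) • (hᴴ * ((A * Aᴴ) * h)) := by rw [Matrix.mul_assoc]
          _ = (n:ℂ) • (hᴴ * h) := by rw [hAH, Matrix.one_mul]
          _ = (n:ℂ) • ((n:ℂ) • (1 : Matrix (Fin n) (Fin n) ℂ)) := by rw [hhHh]
      rw [hmid, smul_smul, smul_smul]
      have hsc : (1:ℂ)/n * ((1:ℂ)/n) * (n:ℂ) * (n:ℂ) = 1 := by
        field_simp
      rw [hsc, one_smul]
    have hBHB : Bᴴ * B = 1 := mul_eq_one_comm.mp hBBH
    have hdetB : det B = det A := by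
      rw [hB, Matrix.det_smul, Matrix.det_mul, Matrix.det_mul]
      have hdethh : det hᴴ * det h = (n:ℂ)^n := by
        have hd := congrArg Matrix.det hHadOrtho
        rw [Matrix.det_mul, Matrix.det_smul, Matrix.det_one, mul_one, Fintype.card_fin] at hd
        rw [mul_comm]
        exact hd
      rw [Fintype.card_fin]
      calc ((1:ℂ)/n)^n * (det hᴴ * det A * det h)
          = ((1:ℂ)/n)^n * ((n:ℂ)^n * det A) := by rw [← hdethh]; ring
        _ = (((1:ℂ)/n) * n)^n * det A := by rw [mul_pow]; ring
        _ = det A := by rw [one_div, inv_mul_cancel₀ hnC, one_pow, one_mul]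
    have hdetA_ne : det A ≠ 0 := by
      rw [hA, Matrix.det_diagonal]
      exact Finset.prod_ne_zero_iff.mpr (fun j _ => pow_ne_zero _ hωne)
    -- Stage 1
    have key1 : ∀ z₁ z₂ : ℂ,
        (1 - (-1:ℂ)^(n-1) * (ω*z₁+z₂)^n) ≠ 0 →
        det (z₁ • (A*B) + z₂ • (B*A) - 1)
          = -(det A) * (1 - (-1:ℂ)^(n-1) * (ω*z₁+z₂)^n) := by
      intro z₁ z₂ hR
      set R : ℂ := 1 - (-1:ℂ)^(n-1) * (ω*z₁+z₂)^n with hRdef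
      set E : Matrix (Fin n) (Fin n) ℂ := z₁ • (A*B) + z₂ • (B*A) - 1 with hE
      set p : Polynomial ℂ := detPoly A E with hp
      have hev : ∀ x : ℂ, p.eval x = det (x • A + E) := fun x => detPoly_eval A E x
      obtain ⟨ρ, hρ⟩ := IsAlgClosed.exists_pow_nat_eq R hn0
      have hρ0 : ρ ≠ 0 := by
        intro h0
        rw [h0, zero_pow hnne] at hρ
        exact hR hρ.symm
      have hroot : ∀ i : ℕ, i < n → p.eval (ω ^ i * ρ) = 0 := by
        intro i _
        rw [hev]
        have hmem : ((ω ^ i * ρ : ℂ), (0:ℂ), z₁, z₂) ∈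
            {q : ℂ × ℂ × ℂ × ℂ |
              q.1 ^ n + q.2.1 ^ n + (-1 : ℂ) ^ (n - 1) * (ω * q.2.2.1 + q.2.2.2) ^ n = 1} := by
          simp only [Set.mem_setOf_eq]
          rw [mul_pow, ← pow_mul, mul_comm i n, pow_mul, hω1, one_pow, one_mul, hρ,
            zero_pow hnne, hRdef]
          ring
        rw [← hSet] at hmem
        simp only [Set.mem_setOf_eq] at hmem
        have heq : (ω ^ i * ρ) • A + E
            = (ω ^ i * ρ) • A + (0:ℂ) • B + z₁ • (A*B) + z₂ • (B*A) - 1 := by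
          rw [hE, zero_smul]
          abel
        rw [heq]
        exact hmem
      have hpn : p.coeff n = det A := detPoly_coeff_card A E
      set q : Polynomial ℂ := Polynomial.C (det A) * (Polynomial.X ^ n - Polynomial.C R) with hq
      set r : Polynomial ℂ := p - q with hr
      have hqcoeff : q.coeff n = det A := by
        rw [hq, Polynomial.coeff_C_mul, Polynomial.coeff_sub, Polynomial.coeff_X_pow,
          if_pos rfl, Polynomial.coeff_C, if_neg hnne, sub_zero, mul_one]
      have hqdeg : q.natDegree ≤ n := by
        refine (Polynomial.natDegree_C_mul_le _ _).trans ?_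
        rw [Polynomial.natDegree_X_pow_sub_C]
      have hrdeg : r.natDegree ≤ n - 1 := by
        rw [Polynomial.natDegree_le_iff_coeff_eq_zero]
        intro N hN
        rcases Nat.lt_or_ge n N with hlt | hge
        · rw [hr, Polynomial.coeff_sub,
            Polynomial.coeff_eq_zero_of_natDegree_lt (lt_of_le_of_lt (detPoly_natDegree_le A E) hlt),
            Polynomial.coeff_eq_zero_of_natDegree_lt (lt_of_le_of_lt hqdeg hlt), sub_self]
        · have hNn : N = n := by omega
          rw [hNn, hr, Polynomial.coeff_sub, hpn, hqcoeff, sub_self]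
      have hr0 : r = 0 := by
        by_contra hne0
        set T : Finset ℂ := (Finset.range n).image (fun i => ω ^ i * ρ) with hT
        have hTcard : T.card = n := by
          rw [hT, Finset.card_image_of_injOn, Finset.card_range]
          intro a ha b hb hab
          simp only [Finset.coe_range, Set.mem_Iio] at ha hb
          exact hprim.pow_inj ha hb (mul_right_cancel₀ hρ0 hab)
        have hsub : T ⊆ r.roots.toFinset := by
          intro t ht
          rw [hT, Finset.mem_image] at ht
          obtain ⟨i, hi, rfl⟩ := ht
          rw [Multiset.mem_toFinset, Polynomial.mem_roots hne0]
          rw [Polynomial.IsRoot.def, hr, Polynomial.eval_sub, hroot i (Finset.mem_range.mp hi), hq]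
          rw [Polynomial.eval_mul, Polynomial.eval_C, Polynomial.eval_sub, Polynomial.eval_pow,
            Polynomial.eval_X, Polynomial.eval_C]
          rw [mul_pow, ← pow_mul, mul_comm i n, pow_mul, hω1, one_pow, one_mul, hρ, sub_self,
            mul_zero, zero_sub, neg_zero]
        have hcontr : n ≤ n - 1 := by
          calc n = T.card := hTcard.symm
            _ ≤ r.roots.toFinset.card := Finset.card_le_card hsub
            _ ≤ Multiset.card r.roots := Multiset.toFinset_card_le _
            _ ≤ r.natDegree := Polynomial.card_roots' r
            _ ≤ n - 1 := hrdeg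
        omega
      have hpq : p = q := by
        have := sub_eq_zero.mp hr0
        exact this
      have hv := hev 0
      rw [hpq, hq] at hv
      rw [Polynomial.eval_mul, Polynomial.eval_C, Polynomial.eval_sub, Polynomial.eval_pow,
        Polynomial.eval_X, Polynomial.eval_C, zero_pow hnne, zero_sub, zero_smul, zero_add] at hv
      rw [hE] at hv
      rw [← hv]
      ring
    -- Stage 2
    have key2 : ∀ z₁ z₂ : ℂ,
        det (z₁ • (A*B) + z₂ • (B*A) - 1)
          = -(det A) * (1 - (-1:ℂ)^(n-1) * (ω*z₁+z₂)^n) := by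
      intro z₁ z₂
      set p2 : Polynomial ℂ := detPoly (A*B) (z₂ • (B*A) - 1) with hp2
      set q2 : Polynomial ℂ := Polynomial.C (-(det A))
          * (1 - Polynomial.C ((-1:ℂ)^(n-1))
              * (Polynomial.C ω * Polynomial.X + Polynomial.C z₂)^n) with hq2
      have hp2eval : ∀ t : ℂ, p2.eval t = det (t • (A*B) + z₂ • (B*A) - 1) := by
        intro t
        rw [hp2, detPoly_eval]
        congr 1
        abel
      have hq2eval : ∀ t : ℂ, q2.eval t = -(det A) * (1 - (-1:ℂ)^(n-1) * (ω*t+z₂)^n) := by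
        intro t
        rw [hq2]
        simp [Polynomial.eval_mul, Polynomial.eval_add, Polynomial.eval_pow, Polynomial.eval_sub]
      have hbadfin : {t : ℂ | 1 - (-1:ℂ)^(n-1) * (ω*t+z₂)^n = 0}.Finite := by
        have hfin0 : {u : ℂ | u ^ n = (-1:ℂ)^(n-1)}.Finite := by
          have hsub0 : {u : ℂ | u ^ n = (-1:ℂ)^(n-1)}
              ⊆ {u : ℂ | (Polynomial.X ^ n - Polynomial.C ((-1:ℂ)^(n-1))).IsRoot u} := by
            intro u hu
            simp only [Set.mem_setOf_eq, Polynomial.IsRoot.def, Polynomial.eval_sub,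
              Polynomial.eval_pow, Polynomial.eval_X, Polynomial.eval_C] at *
            rw [hu, sub_self]
          exact Set.Finite.subset
            (Polynomial.finite_setOf_isRoot (Polynomial.X_pow_sub_C_ne_zero hn0 _)) hsub0
        have hinj : Function.Injective (fun t : ℂ => ω*t+z₂) := by
          intro a b hab
          simp only at hab
          exact mul_left_cancel₀ hωne (by
            have := congrArg (fun u : ℂ => u - z₂) hab
            simpa using this)
        refine Set.Finite.subset (Set.Finite.preimage (Function.Injective.injOn hinj) hfin0) ?_
        intro t ht
        simp only [Set.mem_setOf_eq, Set.mem_preimage] at *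
        have h1 : ((-1:ℂ)^(n-1)) * (ω*t+z₂)^n = 1 := (sub_eq_zero.mp ht).symm
        calc (ω*t+z₂)^n = ((-1:ℂ)^(n-1) * (-1:ℂ)^(n-1)) * (ω*t+z₂)^n := by rw [hc2, one_mul]
          _ = (-1:ℂ)^(n-1) * (((-1:ℂ)^(n-1)) * (ω*t+z₂)^n) := by ring
          _ = (-1:ℂ)^(n-1) := by rw [h1, mul_one]
      have hinf : Set.Infinite {t : ℂ | p2.eval t = q2.eval t} := by
        refine Set.Infinite.mono ?_ (Set.Finite.infinite_compl hbadfin)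
        intro t ht
        simp only [Set.mem_compl_iff, Set.mem_setOf_eq] at ht ⊢
        rw [hp2eval, hq2eval]
        exact key1 t z₂ ht
      have hp2q2 : p2 = q2 := Polynomial.eq_of_infinite_eval_eq _ _ hinf
      have hvv := congrArg (Polynomial.eval z₁) hp2q2
      rw [hp2eval, hq2eval] at hvv
      exact hvv
    -- Stage 3a : determinant of B*A
    have hdetBA : det (B * A) = det A * (-1:ℂ)^(n-1) := by
      set p3 : Polynomial ℂ := detPoly (B*A) (-1) with hp3
      set q3 : Polynomial ℂ := Polynomial.C (-(det A))
          + Polynomial.C (det A * (-1:ℂ)^(n-1)) * Polynomial.X ^ n with hq3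
      have hfun : p3 = q3 := by
        apply Polynomial.funext
        intro t
        rw [hp3, detPoly_eval]
        have e0 : t • (B*A) + (-1 : Matrix (Fin n) (Fin n) ℂ)
            = (0:ℂ) • (A*B) + t • (B*A) - 1 := by
          rw [zero_smul]
          abel
        rw [e0, key2 0 t, hq3]
        simp only [Polynomial.eval_add, Polynomial.eval_mul, Polynomial.eval_pow,
          Polynomial.eval_C, Polynomial.eval_X]
        ring
      have hcoeff := congrArg (fun pp : Polynomial ℂ => pp.coeff n) hfun
      rw [hp3, detPoly_coeff_card, hq3, Polynomial.coeff_add, Polynomial.coeff_C, if_neg hnne,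
        Polynomial.coeff_C_mul, Polynomial.coeff_X_pow, if_pos rfl, zero_add, mul_one] at hcoeff
      exact hcoeff
    have hdetAval : det A = (-1:ℂ)^(n-1) := by
      have hdd : det A * det A = det A * (-1:ℂ)^(n-1) := by
        rw [← hdetBA, Matrix.det_mul, hdetB]
      exact mul_left_cancel₀ hdetA_ne hdd
    have hdetBA1 : det (B * A) = 1 := by
      rw [hdetBA, hdetAval, hc2]
    -- Stage 3b : coefficient of z₁ for each z₂
    have stepA : ∀ z₂ : ℂ,
        (∑ j : Fin n, det ((z₂ • (B*A) - 1).updateCol j (fun i => (A*B) i j)))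
          = det A * (-1:ℂ)^(n-1) * ((n:ℂ) * ω * z₂^(n-1)) := by
      intro z₂
      set p2 : Polynomial ℂ := detPoly (A*B) (z₂ • (B*A) - 1) with hp2
      set q2 : Polynomial ℂ := Polynomial.C (-(det A))
          * (1 - Polynomial.C ((-1:ℂ)^(n-1))
              * (Polynomial.C ω * Polynomial.X + Polynomial.C z₂)^n) with hq2
      have hfun : p2 = q2 := by
        apply Polynomial.funext
        intro t
        rw [hp2, detPoly_eval]
        have e0 : t • (A*B) + (z₂ • (B*A) - 1) = t • (A*B) + z₂ • (B*A) - 1 := by abel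
        rw [e0, key2 t z₂, hq2]
        simp only [Polynomial.eval_mul, Polynomial.eval_add, Polynomial.eval_pow,
          Polynomial.eval_sub, Polynomial.eval_C, Polynomial.eval_X, Polynomial.eval_one]
      have hco := congrArg (fun pp : Polynomial ℂ => pp.coeff 1) hfun
      rw [hp2, detPoly_coeff_one, hq2] at hco
      rw [Polynomial.coeff_C_mul, Polynomial.coeff_sub, Polynomial.coeff_one,
        Polynomial.coeff_C_mul, coeff_linear_pow_one ω z₂ n (by omega)] at hco
      rw [if_neg one_ne_zero, zero_sub] at hco
      rw [hco]
      ring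
    -- Stage 3c : extract the top coefficient in z₂
    have stepB : (∑ j : Fin n, det ((B*A).updateCol j (fun i => (A*B) i j)))
        = det A * (-1:ℂ)^(n-1) * ((n:ℂ) * ω) := by
      set P3 : Polynomial ℂ := ∑ j : Fin n,
          detPoly ((B*A).updateCol j (fun _ => 0))
            ((-1 : Matrix (Fin n) (Fin n) ℂ).updateCol j (fun i => (A*B) i j)) with hP3
      have hfun : P3 = Polynomial.C (det A * (-1:ℂ)^(n-1) * ((n:ℂ) * ω))
          * Polynomial.X ^ (n-1) := by
        apply Polynomial.funext
        intro t
        rw [hP3, Polynomial.eval_finset_sum]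
        have hev : ∀ j : Fin n,
            (detPoly ((B*A).updateCol j (fun _ => 0))
              ((-1 : Matrix (Fin n) (Fin n) ℂ).updateCol j (fun i => (A*B) i j))).eval t
            = det ((t • (B*A) - 1).updateCol j (fun i => (A*B) i j)) := by
          intro j
          rw [detPoly_eval]
          congr 1
          ext i k
          by_cases hk : k = j
          · subst hk
            simp [Matrix.add_apply, Matrix.smul_apply, Matrix.updateCol_self]
          · simp only [Matrix.add_apply, Matrix.smul_apply, Matrix.updateCol_ne hk,
              Matrix.sub_apply, Matrix.neg_apply, Matrix.one_apply, smul_eq_mul]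
            ring
        rw [Finset.sum_congr rfl (fun j _ => hev j), stepA t]
        simp only [Polynomial.eval_mul, Polynomial.eval_pow, Polynomial.eval_C, Polynomial.eval_X]
        ring
      have hco := congrArg (fun pp : Polynomial ℂ => pp.coeff (n-1)) hfun
      rw [hP3, Polynomial.finset_sum_coeff] at hco
      have hcoeach : ∀ j : Fin n,
          (detPoly ((B*A).updateCol j (fun _ => 0))
            ((-1 : Matrix (Fin n) (Fin n) ℂ).updateCol j (fun i => (A*B) i j))).coeff (n-1)
          = det ((B*A).updateCol j (fun i => (A*B) i j)) := by
        intro j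
        rw [detPoly_coeff_pred (by omega)]
        rw [Finset.sum_eq_single j]
        · congr 1
          ext r k
          by_cases hk : k = j
          · subst hk
            simp [Matrix.updateCol_self]
          · rw [Matrix.updateCol_ne hk, Matrix.updateCol_ne hk, Matrix.updateCol_ne hk]
        · intro i _ hij
          apply Matrix.det_eq_zero_of_column_eq_zero j
          intro r
          rw [Matrix.updateCol_ne (Ne.symm hij)]
          rw [Matrix.updateCol_self]
        · intro hj
          exact absurd (Finset.mem_univ j) hj
      rw [Finset.sum_congr rfl (fun j _ => hcoeach j)] at hco
      rw [Polynomial.coeff_C_mul, Polynomial.coeff_X_pow, if_pos rfl, mul_one] at hco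
      exact hco
    -- Stage 3d : trace identity
    have hWtr0 : Matrix.trace (Matrix.adjugate (B*A) * (A*B))
        = det A * (-1:ℂ)^(n-1) * ((n:ℂ) * ω) := by
      rw [← stepB, Matrix.trace]
      refine Finset.sum_congr rfl fun j _ => ?_
      have hcr := congrArg (fun v : Fin n → ℂ => v j)
        (Matrix.cramer_eq_adjugate_mulVec (B*A) (fun i => (A*B) i j))
      simp only [Matrix.cramer_apply, Matrix.mulVec, dotProduct] at hcr
      rw [Matrix.diag_apply, Matrix.mul_apply]
      exact hcr.symm
    -- Stage 3e : the commutator trace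
    set W : Matrix (Fin n) (Fin n) ℂ := Aᴴ * Bᴴ * A * B with hW
    have hBAW : (B*A) * W = A*B := by
      rw [hW]
      calc (B*A) * (Aᴴ * Bᴴ * A * B)
          = B * ((A * Aᴴ) * (Bᴴ * (A * B))) := by simp only [Matrix.mul_assoc]
        _ = B * (Bᴴ * (A*B)) := by rw [hAH, Matrix.one_mul]
        _ = (B * Bᴴ) * (A*B) := by rw [Matrix.mul_assoc]
        _ = A*B := by rw [hBBH, Matrix.one_mul]
    have htrW : Matrix.trace W = (n:ℂ) * ω := by
      have h1 : Matrix.trace (Matrix.adjugate (B*A) * (A*B))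
          = det (B*A) * Matrix.trace W := by
        rw [← hBAW, ← Matrix.mul_assoc, Matrix.adjugate_mul, Matrix.smul_mul, Matrix.one_mul,
          Matrix.trace_smul, smul_eq_mul]
      rw [hWtr0, hdetBA] at h1
      have h2 : det A * (-1:ℂ)^(n-1) ≠ 0 := by
        rw [hdetAval, hc2]
        exact one_ne_zero
      exact (mul_left_cancel₀ h2 h1).symm
    have hWH : Wᴴ = Bᴴ * (Aᴴ * (B * A)) := by
      rw [hW]
      simp only [Matrix.conjTranspose_mul, Matrix.conjTranspose_conjTranspose, Matrix.mul_assoc]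
    have hWWH : W * Wᴴ = 1 := by
      rw [hWH, hW]
      calc (Aᴴ * Bᴴ * A * B) * (Bᴴ * (Aᴴ * (B * A)))
          = Aᴴ * (Bᴴ * (A * ((B * Bᴴ) * (Aᴴ * (B * A))))) := by simp only [Matrix.mul_assoc]
        _ = Aᴴ * (Bᴴ * (A * (Aᴴ * (B * A)))) := by rw [hBBH, Matrix.one_mul]
        _ = Aᴴ * (Bᴴ * ((A * Aᴴ) * (B * A))) := by rw [Matrix.mul_assoc]
        _ = Aᴴ * (Bᴴ * (B * A)) := by rw [hAH, Matrix.one_mul]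
        _ = Aᴴ * ((Bᴴ * B) * A) := by rw [Matrix.mul_assoc]
        _ = Aᴴ * A := by rw [hBHB, Matrix.one_mul]
        _ = 1 := hAHA
    have htrWH : Matrix.trace Wᴴ = (n:ℂ) * (starRingEnd ℂ) ω := by
      rw [Matrix.trace_conjTranspose, htrW]
      rw [Complex.star_def, _root_.map_mul, Complex.conj_natCast]
    have hωconj1 : ω * (starRingEnd ℂ) ω = 1 := by
      rw [hconjω, mul_inv_cancel₀ hωne]
    have hZ : W - ω • (1 : Matrix (Fin n) (Fin n) ℂ) = 0 := by
      apply eq_zero_of_trace_mul_conjTranspose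
      have hZH : (W - ω • (1 : Matrix (Fin n) (Fin n) ℂ))ᴴ
          = Wᴴ - (starRingEnd ℂ) ω • (1 : Matrix (Fin n) (Fin n) ℂ) := by
        rw [Matrix.conjTranspose_sub, Matrix.conjTranspose_smul, Matrix.conjTranspose_one]
        rfl
      rw [hZH, Matrix.sub_mul, Matrix.mul_sub, Matrix.mul_sub]
      simp only [Matrix.mul_smul, Matrix.smul_mul, Matrix.mul_one, Matrix.one_mul, smul_smul,
        hWWH, Matrix.trace_sub, Matrix.trace_smul, Matrix.trace_one, smul_eq_mul,
        Fintype.card_fin, htrW, htrWH]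
      linear_combination (-(n:ℂ)) * hωconj1
    have hWval : W = ω • (1 : Matrix (Fin n) (Fin n) ℂ) := sub_eq_zero.mp hZ
    have hABBA : A * B = ω • (B * A) := by
      rw [← hBAW, hWval, Matrix.mul_smul, Matrix.mul_one]
    -- Stage 4 : support of B
    have hBsupp : ∀ j k : Fin n, j ≠ k + 1 → B j k = 0 := by
      intro j k hjk
      have he := congrArg (fun M : Matrix (Fin n) (Fin n) ℂ => M j k) hABBA
      simp only [Matrix.smul_apply, smul_eq_mul] at he
      rw [hABapp, hBAapp] at he
      have hfac : B j k * (ω ^ (j:ℕ) - ω ^ ((k:ℕ)+1)) = 0 := by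
        rw [pow_succ]
        linear_combination he
      rcases mul_eq_zero.mp hfac with h0 | h0
      · exact h0
      · exfalso
        have heq2 : ω ^ (j:ℕ) = ω ^ ((k:ℕ)+1) := sub_eq_zero.mp h0
        have h3 : (j:ℕ) = ((k:ℕ)+1) % n :=
          hprim.pow_inj j.isLt (Nat.mod_lt _ hn0) (by rw [hpowmod]; exact heq2)
        exact hjk (Fin.ext (by rw [hvaladd]; omega))
    -- Stage 5 : unimodular subdiagonal
    have hcnorm : ∀ k : Fin n, (starRingEnd ℂ) (B (k+1) k) * B (k+1) k = 1 := by
      intro k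
      have he := congrArg (fun M : Matrix (Fin n) (Fin n) ℂ => M k k) hBHB
      simp only [Matrix.mul_apply, Matrix.one_apply_eq] at he
      rw [Finset.sum_eq_single (k+1)] at he
      · rw [Matrix.conjTranspose_apply, Complex.star_def] at he
        exact he
      · intro j _ hj
        rw [hBsupp j k hj, mul_zero]
      · intro hj
        exact absurd (Finset.mem_univ _) hj
    -- Stage 6 : intertwining and recursion
    have hAhB : A * h = h * B := by
      have h1 : h * B = ((1:ℂ)/n) • ((h * hᴴ) * (A * h)) := by
        rw [hB, Matrix.mul_smul]
        congr 1
        simp only [Matrix.mul_assoc]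
      rw [h1, hHadOrtho, Matrix.smul_mul, Matrix.one_mul, smul_smul, one_div,
        inv_mul_cancel₀ hnC, one_smul]
    have hrec : ∀ j k : Fin n, ω ^ (j:ℕ) * h j k = h j (k+1) * B (k+1) k := by
      intro j k
      have hL : (A * h) j k = ω ^ (j:ℕ) * h j k := by rw [hA, Matrix.diagonal_mul]
      have hR : (h * B) j k = h j (k+1) * B (k+1) k := by
        rw [Matrix.mul_apply]
        rw [Finset.sum_eq_single (k+1)]
        · intro l _ hl
          rw [hBsupp l k hl, mul_zero]
        · intro hj
          exact absurd (Finset.mem_univ _) hj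
      rw [← hL, hAhB, hR]
    have hstep : ∀ j k : Fin n,
        h j (k+1) = ω ^ (j:ℕ) * h j k * (starRingEnd ℂ) (B (k+1) k) := by
      intro j k
      calc h j (k+1) = h j (k+1) * (B (k+1) k * (starRingEnd ℂ) (B (k+1) k)) := by
            rw [mul_comm (B (k+1) k), hcnorm, mul_one]
        _ = (h j (k+1) * B (k+1) k) * (starRingEnd ℂ) (B (k+1) k) := by ring
        _ = (ω ^ (j:ℕ) * h j k) * (starRingEnd ℂ) (B (k+1) k) := by rw [← hrec j k]
    -- Stage 7 : construct the diagonals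
    have habsB : ∀ k : Fin n, ‖B (k+1) k‖ = 1 := by
      intro k
      have h1 := hcnorm k
      rw [mul_comm, Complex.mul_conj] at h1
      have h2 : Complex.normSq (B (k+1) k) = 1 := by exact_mod_cast h1
      rw [Complex.norm_def, h2, Real.sqrt_one]
    refine ⟨(fun j => h j 0),
      (fun k => ∏ l ∈ Finset.range (k:ℕ),
        (starRingEnd ℂ) (B ((l : Fin n) + 1) (l : Fin n))), ?_, ?_, ?_⟩
    · intro j
      exact hHadUnimod j 0
    · intro k
      rw [norm_prod]
      rw [Finset.prod_congr rfl (fun l _ => by rw [Complex.norm_conj, habsB])]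
      exact Finset.prod_const_one
    · have hind : ∀ m : ℕ, m < n → ∀ j : Fin n,
          h j ((m : ℕ) : Fin n) = h j 0 * ω ^ ((j:ℕ) * m)
            * ∏ l ∈ Finset.range m, (starRingEnd ℂ) (B ((l : Fin n) + 1) (l : Fin n)) := by
        intro m
        induction m with
        | zero => intro _ j; simp
        | succ m ih =>
          intro hm j
          have hm' : m < n := by omega
          have hcast : (((m+1 : ℕ)) : Fin n) = ((m:ℕ) : Fin n) + 1 := by push_cast; ring
          rw [hcast, hstep j ((m:ℕ) : Fin n), ih hm' j, Finset.prod_range_succ]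
          rw [Nat.mul_succ, pow_add]
          ring
      ext j k
      rw [Matrix.mul_diagonal, Matrix.diagonal_mul, hF]
      have hfin := hind (k : ℕ) k.isLt j
      rw [Fin.cast_val_eq_self] at hfin
      rw [hfin]
      rfl

  · rintro ⟨d₁, d₂, hd₁, hd₂, hhd⟩
    have hhapp : ∀ j k : Fin n, h j k = d₁ j * ω ^ ((j : ℕ) * (k : ℕ)) * d₂ k := by
      intro j k
      rw [hhd, Matrix.mul_diagonal, Matrix.diagonal_mul, hF]
      rfl
    have hBapp : ∀ j k : Fin n, B j k
        = if j = k + 1 then (starRingEnd ℂ) (d₂ j) * d₂ k else 0 := by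
      intro j k
      rw [hB, Matrix.smul_apply, smul_eq_mul, Matrix.mul_assoc, Matrix.mul_apply]
      set ζ : ℂ := ω ^ ((k : ℕ) + 1) * (ω ^ (j : ℕ))⁻¹ with hζ
      have hterm : ∀ l : Fin n, hᴴ j l * (A * h) l k
          = ((starRingEnd ℂ) (d₂ j) * d₂ k) * ζ ^ (l : ℕ) := by
        intro l
        rw [Matrix.conjTranspose_apply, hA, Matrix.diagonal_mul, hhapp, hhapp]
        rw [Complex.star_def, _root_.map_mul, _root_.map_mul, hζinv]
        have e1 : (starRingEnd ℂ) (d₁ l) * d₁ l = 1 := hunit _ (hd₁ l)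
        have e2 : ζ ^ (l : ℕ)
            = ω ^ ((l : ℕ) * (k : ℕ)) * ω ^ (l : ℕ) * (ω ^ ((l : ℕ) * (j : ℕ)))⁻¹ := by
          rw [hζ, mul_pow, inv_pow, ← pow_mul, ← pow_mul]
          rw [mul_comm ((k : ℕ) + 1) (l : ℕ), mul_comm ((j : ℕ)) (l : ℕ)]
          rw [Nat.mul_add, mul_one, pow_add]
        rw [e2]
        calc (starRingEnd ℂ) (d₁ l) * (ω ^ ((l : ℕ) * (j : ℕ)))⁻¹ * (starRingEnd ℂ) (d₂ j)
              * (ω ^ (l : ℕ) * (d₁ l * ω ^ ((l : ℕ) * (k : ℕ)) * d₂ k))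
            = ((starRingEnd ℂ) (d₁ l) * d₁ l) * (((starRingEnd ℂ) (d₂ j) * d₂ k)
                * (ω ^ ((l : ℕ) * (k : ℕ)) * ω ^ (l : ℕ) * (ω ^ ((l : ℕ) * (j : ℕ)))⁻¹)) := by
              ring
          _ = ((starRingEnd ℂ) (d₂ j) * d₂ k)
                * (ω ^ ((l : ℕ) * (k : ℕ)) * ω ^ (l : ℕ) * (ω ^ ((l : ℕ) * (j : ℕ)))⁻¹) := by
              rw [e1, one_mul]
      rw [Finset.sum_congr rfl (fun l _ => hterm l), ← Finset.mul_sum]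
      have hsum : (∑ l : Fin n, ζ ^ (l : ℕ)) = ∑ l ∈ Finset.range n, ζ ^ l :=
        Fin.sum_univ_eq_sum_range (fun l => ζ ^ l) n
      have hζn : ζ ^ n = 1 := by
        have e1 : (ω ^ ((k : ℕ) + 1)) ^ n = 1 := by
          rw [← pow_mul, mul_comm, pow_mul, hω1, one_pow]
        have e2 : ((ω ^ (j : ℕ))⁻¹) ^ n = 1 := by
          rw [inv_pow, ← pow_mul, mul_comm, pow_mul, hω1, one_pow, inv_one]
        rw [hζ, mul_pow, e1, e2, one_mul]
      have hζiff : ζ = 1 ↔ j = k + 1 := by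
        constructor
        · intro h1
          have h2 : ω ^ ((k : ℕ) + 1) = ω ^ (j : ℕ) := by
            have := congrArg (fun t => t * ω ^ (j : ℕ)) h1
            simpa [hζ, inv_mul_cancel_right₀ (pow_ne_zero _ hωne)] using this
          have h3 : ((k : ℕ) + 1) % n = (j : ℕ) :=
            hprim.pow_inj (Nat.mod_lt _ hn0) j.isLt (by rw [hpowmod]; exact h2)
          apply Fin.ext
          rw [hvaladd]
          omega
        · rintro rfl
          rw [hζ, hvaladd, ← hpowmod ((k : ℕ) + 1)]
          exact mul_inv_cancel₀ (pow_ne_zero _ hωne)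
      rw [hsum, geom_sum_root hn0 hζn]
      by_cases hjk : j = k + 1
      · rw [if_pos (hζiff.mpr hjk), if_pos hjk]
        field_simp
      · rw [if_neg (fun hc => hjk (hζiff.mp hc)), if_neg hjk]
        ring
    ext p
    obtain ⟨x, y, z₁, z₂⟩ := p
    simp only [Set.mem_setOf_eq]
    have hdet : (x • A + y • B + z₁ • (A * B) + z₂ • (B * A)
          - (1 : Matrix (Fin n) (Fin n) ℂ)).det
        = (-1 : ℂ) ^ (n - 1) * (x ^ n + y ^ n
            + (-1 : ℂ) ^ (n - 1) * (ω * z₁ + z₂) ^ n - 1) := by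
      set M := x • A + y • B + z₁ • (A * B) + z₂ • (B * A)
          - (1 : Matrix (Fin n) (Fin n) ℂ) with hM
      have hMapp : ∀ j k : Fin n, M j k
          = x * A j k + y * B j k + z₁ * (ω ^ (j : ℕ) * B j k)
              + z₂ * (B j k * ω ^ (k : ℕ)) - (if j = k then 1 else 0) := by
        intro j k
        rw [hM]
        simp only [Matrix.sub_apply, Matrix.add_apply, Matrix.smul_apply, smul_eq_mul,
          hABapp, hBAapp, Matrix.one_apply]
      have hMsupp : ∀ j k : Fin n, j ≠ k → j ≠ k + 1 → M j k = 0 := by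
        intro j k hjk hjk1
        rw [hMapp, hAapp, hBapp, if_neg hjk, if_neg hjk1, if_neg hjk]
        ring
      have hMdiag : ∀ j : Fin n, M j j = x * ω ^ (j : ℕ) - 1 := by
        intro j
        rw [hMapp, hAapp, hBapp, if_pos rfl, if_pos rfl, if_neg (hjj1 j)]
        ring
      have hMcyc : ∀ k : Fin n, M (k + 1) k
          = ((starRingEnd ℂ) (d₂ (k + 1)) * d₂ k)
              * (y + z₁ * ω ^ ((k : ℕ) + 1) + z₂ * ω ^ (k : ℕ)) := by
        intro k
        rw [hMapp, hAapp, hBapp, if_pos rfl, if_neg (Ne.symm (hjj1 k)),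
          if_neg (fun hc => (hjj1 k) hc.symm), hpow_fin_succ]
        ring
      rw [det_diag_cycle hn M hMsupp]
      have hprod1 : (∏ j : Fin n, M j j) = (-1 : ℂ) ^ n * (1 - x ^ n) := by
        rw [Finset.prod_congr rfl (fun j _ => hMdiag j)]
        rw [Fin.prod_univ_eq_prod_range (fun j => x * ω ^ j - 1) n]
        have : ∀ j ∈ Finset.range n, x * ω ^ j - 1 = -1 * (1 - ω ^ j * x) := by
          intro j _; ring
        rw [Finset.prod_congr rfl this, Finset.prod_mul_distrib, Finset.prod_const,
          Finset.card_range]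
        rw [show (∏ j ∈ Finset.range n, (1 - ω ^ j * x)) = 1 ^ n - x ^ n from
          prod_sub_pow hn0 hprim 1 x]
        rw [one_pow]
      have hprod2 : (∏ k : Fin n, M (k + 1) k)
          = y ^ n - (-1 : ℂ) ^ n * (ω * z₁ + z₂) ^ n := by
        rw [Finset.prod_congr rfl (fun k _ => hMcyc k), Finset.prod_mul_distrib]
        have hb : (∏ k : Fin n, (starRingEnd ℂ) (d₂ (k + 1)) * d₂ k) = 1 := by
          rw [Finset.prod_mul_distrib, ← map_prod]
          have hre : (∏ k : Fin n, d₂ (k + 1)) = ∏ k : Fin n, d₂ k :=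
            Equiv.prod_comp (Equiv.addRight (1 : Fin n)) d₂
          rw [hre]
          refine hunit _ ?_
          rw [norm_prod]
          exact Finset.prod_eq_one (fun k _ => hd₂ k)
        rw [hb]
        have hfac : ∀ k : Fin n, y + z₁ * ω ^ ((k : ℕ) + 1) + z₂ * ω ^ (k : ℕ)
            = y - ω ^ (k : ℕ) * (-(ω * z₁ + z₂)) := by
          intro k; rw [pow_succ]; ring
        rw [Finset.prod_congr rfl (fun k _ => hfac k)]
        rw [Fin.prod_univ_eq_prod_range (fun k => y - ω ^ k * (-(ω * z₁ + z₂))) n]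
        rw [prod_sub_pow hn0 hprim y (-(ω * z₁ + z₂)), neg_pow]
        ring
      rw [hprod1, hprod2, hpow_neg1]
      ring
    rw [hdet]
    constructor
    · intro h0
      rcases mul_eq_zero.mp h0 with h1 | h1
      · exact absurd h1 (pow_ne_zero _ (by norm_num))
      · exact sub_eq_zero.mp h1
    · intro h1
      rw [h1, sub_self, mul_zero]
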